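/- Let K ⊆ ℝⁿ be closed convex, U an affine subspace with K ∩ U ≠ ∅, and S a separating operator for K satisfying A1–A3. The CARM sequence x^{k+1} = C^S(x^k), starting from x⁰ ∈ U, is well defined, contained in U, Fejér monotone with respect to K ∩ U, and converges to a point of K ∩ U. -/

import Mathlib

open Filter Topology
open scoped RealInnerProductSpace

variable {E : Type*} [NormedAddCommGroup E] [InnerProductSpace ℝ E]

lemma carm_expand (zp v : E) (t : ℝ) :
    ‖zp - t • v‖ ^ 2 = ‖zp‖ ^ 2 - 2 * (t * ⟪zp, v⟫) + t ^ 2 * ‖v‖ ^ 2 := by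
  rw [norm_sub_sq_real, real_inner_smul_right, norm_smul, Real.norm_eq_abs, mul_pow, sq_abs]

lemma carm_perp {z p w : E} (h : ∀ t : ℝ, ‖z - p‖ ≤ ‖z - (p + t • (w - p))‖) :
    ⟪z - p, w - p⟫ = 0 := by
  have key : ∀ t : ℝ, 2 * t * ⟪z - p, w - p⟫ ≤ t ^ 2 * ‖w - p‖ ^ 2 := by
    intro t
    have h2 : ‖z - p‖ ^ 2 ≤ ‖z - (p + t • (w - p))‖ ^ 2 :=
      pow_le_pow_left₀ (norm_nonneg _) (h t) 2
    have hrw : z - (p + t • (w - p)) = (z - p) - t • (w - p) := by module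
    rw [hrw] at h2
    have hexp := carm_expand (z - p) (w - p) t
    linarith
  rcases eq_or_ne (w - p) 0 with h0 | h0
  · rw [h0, inner_zero_right]
  · have hM : 0 < ‖w - p‖ ^ 2 := pow_pos (norm_pos_iff.mpr h0) 2
    have k := key (⟪z - p, w - p⟫ / ‖w - p‖ ^ 2)
    rw [div_pow] at k
    have k2 : 2 * ⟪z - p, w - p⟫ ^ 2 ≤ ⟪z - p, w - p⟫ ^ 2 := by
      have e1 : 2 * (⟪z - p, w - p⟫ / ‖w - p‖ ^ 2) * ⟪z - p, w - p⟫ * ‖w - p‖ ^ 2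
          = 2 * ⟪z - p, w - p⟫ ^ 2 := by field_simp
      have e2 : ⟪z - p, w - p⟫ ^ 2 / (‖w - p‖ ^ 2) ^ 2 * ‖w - p‖ ^ 2 * ‖w - p‖ ^ 2
          = ⟪z - p, w - p⟫ ^ 2 := by field_simp
      nlinarith [mul_le_mul_of_nonneg_right k (le_of_lt hM)]
    nlinarith [sq_nonneg ⟪z - p, w - p⟫]

lemma carm_obtuse {z p w : E}
    (h : ∀ t : ℝ, 0 < t → t ≤ 1 → ‖z - p‖ ≤ ‖z - (p + t • (w - p))‖) :
    ⟪z - p, w - p⟫ ≤ 0 := by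
  have key : ∀ t : ℝ, 0 < t → t ≤ 1 → 2 * t * ⟪z - p, w - p⟫ ≤ t ^ 2 * ‖w - p‖ ^ 2 := by
    intro t ht ht1
    have h2 : ‖z - p‖ ^ 2 ≤ ‖z - (p + t • (w - p))‖ ^ 2 :=
      pow_le_pow_left₀ (norm_nonneg _) (h t ht ht1) 2
    have hrw : z - (p + t • (w - p)) = (z - p) - t • (w - p) := by module
    rw [hrw] at h2
    have hexp := carm_expand (z - p) (w - p) t
    linarith
  by_contra hc
  push_neg at hc
  set c := ⟪z - p, w - p⟫ with hcdef
  rcases eq_or_lt_of_le (sq_nonneg ‖w - p‖) with hM | hM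
  · have := key 1 one_pos le_rfl
    nlinarith
  · set M := ‖w - p‖ ^ 2 with hMdef
    have ht0 : 0 < min 1 (c / M) := lt_min one_pos (div_pos hc hM)
    have ht1 : min 1 (c / M) ≤ 1 := min_le_left _ _
    have k := key _ ht0 ht1
    have h3 : min 1 (c / M) * M ≤ c := by
      have hle : min 1 (c / M) ≤ c / M := min_le_right _ _
      calc min 1 (c / M) * M ≤ (c / M) * M := by nlinarith
        _ = c := by field_simp
    nlinarith [sq_nonneg (min 1 (c / M))]

lemma carm_key_inner {a u v : E} (h : ‖a - u‖ = ‖a - v‖) :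
    ⟪a - u, v - u⟫ = (1 / 2) * ‖v - u‖ ^ 2 := by
  have h2 : ‖a - u‖ ^ 2 = ‖a - v‖ ^ 2 := by rw [h]
  have hrw : a - v = (a - u) - (v - u) := by abel
  have hexp := norm_sub_sq_real (a - u) (v - u)
  rw [← hrw] at hexp
  linarith

set_option maxHeartbeats 2000000 in
lemma carm_step {n : ℕ} (K U : Set (EuclideanSpace ℝ (Fin n)))
    (Q : EuclideanSpace ℝ (Fin n) →ₗ[ℝ] EuclideanSpace ℝ (Fin n))
    (b : EuclideanSpace ℝ (Fin n)) (hUQ : U = {x | Q x = b})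
    (S : EuclideanSpace ℝ (Fin n) → Set (EuclideanSpace ℝ (Fin n)))
    (hA1 : ∀ x, IsClosed (S x) ∧ Convex ℝ (S x))
    (hA2 : ∀ x, K ⊆ S x)
    (PS PU : EuclideanSpace ℝ (Fin n) → EuclideanSpace ℝ (Fin n))
    (hPS : ∀ y, PS y ∈ S y ∧ ∀ w ∈ S y, dist y (PS y) ≤ dist y w)
    (hPU : ∀ y, PU y ∈ U ∧ ∀ w ∈ U, dist y (PU y) ≤ dist y w)
    (RS RU : EuclideanSpace ℝ (Fin n) → EuclideanSpace ℝ (Fin n))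
    (hRS : ∀ y, RS y = (2 : ℝ) • PS y - y)
    (hRU : ∀ y, RU y = (2 : ℝ) • PU y - y)
    (CS : EuclideanSpace ℝ (Fin n) → EuclideanSpace ℝ (Fin n))
    (hCS : ∀ x ∈ U,
      CS x ∈ affineSpan ℝ ({x, RS x, RU (RS x)} : Set (EuclideanSpace ℝ (Fin n))) ∧
      dist (CS x) x = dist (CS x) (RS x) ∧ dist (CS x) x = dist (CS x) (RU (RS x)))
    (z : EuclideanSpace ℝ (Fin n)) (hz : z ∈ U) :
    CS z ∈ U ∧ (∀ y ∈ K ∩ U, ‖CS z - y‖ ^ 2 + ‖CS z - z‖ ^ 2 ≤ ‖z - y‖ ^ 2) ∧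
      Metric.infDist z (S z) ≤ ‖CS z - z‖ := by
  obtain ⟨hCaff, hd1, hd2⟩ := hCS z hz
  have hUmem : ∀ v : EuclideanSpace ℝ (Fin n), v ∈ U ↔ Q v = b := fun v => by
    rw [hUQ]; exact Iff.rfl
  have hQz : Q z = b := (hUmem z).mp hz
  -- orthogonality of projection onto U
  have perpU : ∀ zz : EuclideanSpace ℝ (Fin n), ∀ w ∈ U, ⟪zz - PU zz, w - PU zz⟫ = 0 := by
    intro zz w hw
    apply carm_perp
    intro t
    have hmem : PU zz + t • (w - PU zz) ∈ U := by
      rw [hUmem]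
      have h1 : Q (PU zz) = b := (hUmem _).mp (hPU zz).1
      have h2 : Q w = b := (hUmem _).mp hw
      simp [map_add, map_smul, map_sub, h1, h2]
    have := (hPU zz).2 _ hmem
    rwa [dist_eq_norm, dist_eq_norm] at this
  -- obtuse angle for projection onto S z
  have obtuseS : ∀ w ∈ S z, ⟪z - PS z, w - PS z⟫ ≤ 0 := by
    intro w hw
    apply carm_obtuse
    intro t ht ht1
    have hmem : PS z + t • (w - PS z) ∈ S z := by
      have hcomb : PS z + t • (w - PS z) = (1 - t) • PS z + t • w := by module
      rw [hcomb]
      exact (hA1 z).2 (hPS z).1 hw (by linarith) (le_of_lt ht) (by ring)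
    have := (hPS z).2 _ hmem
    rwa [dist_eq_norm, dist_eq_norm] at this
  have ha1 : RS z = (2 : ℝ) • PS z - z := hRS z
  have ha2 : RU (RS z) = (2 : ℝ) • PU (RS z) - RS z := hRU (RS z)
  -- span decomposition of CS z - z
  have hdir : CS z - z ∈ Submodule.span ℝ ({RS z - z, RU (RS z) - z} :
      Set (EuclideanSpace ℝ (Fin n))) := by
    have h1 : CS z -ᵥ z ∈ (affineSpan ℝ ({z, RS z, RU (RS z)} :
        Set (EuclideanSpace ℝ (Fin n)))).direction :=
      AffineSubspace.vsub_mem_direction hCaff (subset_affineSpan ℝ _ (by simp))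
    rw [direction_affineSpan, vectorSpan_eq_span_vsub_set_right ℝ
      (show z ∈ ({z, RS z, RU (RS z)} : Set (EuclideanSpace ℝ (Fin n))) by simp)] at h1
    have himg : (fun x => x -ᵥ z) '' ({z, RS z, RU (RS z)} : Set (EuclideanSpace ℝ (Fin n)))
        = insert (0 : EuclideanSpace ℝ (Fin n))
            ({RS z - z, RU (RS z) - z} : Set (EuclideanSpace ℝ (Fin n))) := by
      simp [Set.image_insert_eq, vsub_eq_sub, sub_self]
    rw [himg, Submodule.span_insert_zero] at h1
    exact h1
  obtain ⟨s, t, hst⟩ := Submodule.mem_span_pair.mp hdir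
  have hdec : z - CS z = (2 * (s + t)) • (z - PS z) + (2 * t) • (RS z - PU (RS z)) := by
    linear_combination (norm := module) (1 : ℝ) • hst + (-(s + t)) • ha1 + (-t) • ha2
  -- equidistance inner product facts
  have key1 := carm_key_inner (show ‖CS z - z‖ = ‖CS z - RS z‖ by
    rw [← dist_eq_norm, ← dist_eq_norm]; exact hd1)
  have e1 : RS z - z = (-2 : ℝ) • (z - PS z) := by
    linear_combination (norm := module) ha1
  have h1 : ⟪z - CS z, z - PS z⟫ = ‖z - PS z‖ ^ 2 := by
    rw [e1, real_inner_smul_right, norm_smul, Real.norm_eq_abs] at key1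
    have habs : |(-2 : ℝ)| = 2 := by norm_num
    rw [habs, mul_pow] at key1
    have hflip : z - CS z = -(CS z - z) := by abel
    rw [hflip, inner_neg_left]
    linarith
  have key2 := carm_key_inner (show ‖CS z - RS z‖ = ‖CS z - RU (RS z)‖ by
    rw [← dist_eq_norm, ← dist_eq_norm]; exact hd1.symm.trans hd2)
  have e2 : RU (RS z) - RS z = (-2 : ℝ) • (RS z - PU (RS z)) := by
    linear_combination (norm := module) ha2
  have hCa1n2 : ⟪CS z - RS z, RS z - PU (RS z)⟫ = -‖RS z - PU (RS z)‖ ^ 2 := by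
    rw [e2, real_inner_smul_right, norm_smul, Real.norm_eq_abs] at key2
    have habs : |(-2 : ℝ)| = 2 := by norm_num
    rw [habs, mul_pow] at key2
    linarith
  have hCmn2 : ⟪CS z - PU (RS z), RS z - PU (RS z)⟫ = 0 := by
    have hrw : CS z - PU (RS z) = (CS z - RS z) + (RS z - PU (RS z)) := by abel
    rw [hrw, inner_add_left, hCa1n2, real_inner_self_eq_norm_sq]
    ring
  have hzmn2 : ⟪z - PU (RS z), RS z - PU (RS z)⟫ = 0 := by
    rw [real_inner_comm]
    exact perpU (RS z) z hz
  have hCzn2 : ⟪CS z - z, RS z - PU (RS z)⟫ = 0 := by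
    have hrw : CS z - z = (CS z - PU (RS z)) - (z - PU (RS z)) := by abel
    rw [hrw, inner_sub_left, hCmn2, hzmn2]
    ring
  -- inner products of a1 - z and a2 - z with n2
  have hx1 : ⟪RS z - z, RS z - PU (RS z)⟫ = ‖RS z - PU (RS z)‖ ^ 2 := by
    have hrw : RS z - z = (RS z - PU (RS z)) - (z - PU (RS z)) := by abel
    rw [hrw, inner_sub_left, hzmn2, real_inner_self_eq_norm_sq]
    ring
  have hx2 : ⟪RU (RS z) - z, RS z - PU (RS z)⟫ = -‖RS z - PU (RS z)‖ ^ 2 := by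
    have hrw : RU (RS z) - z = (RU (RS z) - RS z) + (RS z - z) := by abel
    rw [hrw, inner_add_left, hx1, e2, real_inner_smul_left, real_inner_self_eq_norm_sq]
    ring
  have hsn2 : (s - t) * ‖RS z - PU (RS z)‖ ^ 2 = 0 := by
    have h0 := hCzn2
    rw [← hst, inner_add_left, real_inner_smul_left, real_inner_smul_left, hx1, hx2] at h0
    linarith
  -- CS z ∈ U
  have hQm : Q (PU (RS z)) = b := (hUmem _).mp (hPU (RS z)).1
  have hQn2 : (s - t) • Q (RS z - PU (RS z)) = 0 := by
    rcases eq_or_ne (RS z - PU (RS z)) 0 with h0 | h0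
    · rw [h0, map_zero, smul_zero]
    · have hq : 0 < ‖RS z - PU (RS z)‖ ^ 2 := pow_pos (norm_pos_iff.mpr h0) 2
      have hst' : s - t = 0 := by
        rcases mul_eq_zero.mp hsn2 with h | h
        · exact h
        · exact absurd h (ne_of_gt hq)
      rw [hst', zero_smul]
  have hQC : Q (CS z) = b + (s - t) • Q (RS z - PU (RS z)) := by
    have hCz : CS z = z + (s • (RS z - z) + t • (RU (RS z) - z)) := by
      linear_combination (norm := module) (-1 : ℝ) • hst
    have hA1q : Q (RS z - z) = Q (RS z - PU (RS z)) := by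
      rw [map_sub, map_sub, hQz, hQm]
    have hA2q : Q (RU (RS z) - z) = -Q (RS z - PU (RS z)) := by
      have hrw : RU (RS z) - z = ((2 : ℝ) • PU (RS z) - RS z) - z := by rw [← ha2]
      rw [hrw, map_sub, map_sub, map_smul, map_sub, hQm, hQz]
      module
    rw [hCz, map_add, map_add, map_smul, map_smul, hQz, hA1q, hA2q]
    module
  have hCU : CS z ∈ U := (hUmem _).mpr (by rw [hQC, hQn2, add_zero])
  refine ⟨hCU, ?_, ?_⟩
  · -- Fejér inequality
    intro y hy
    have hyS : y ∈ S z := hA2 z hy.1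
    have hobt : ⟪z - PS z, y - PS z⟫ ≤ 0 := obtuseS y hyS
    have hymn2 : ⟪RS z - PU (RS z), y - PU (RS z)⟫ = 0 := perpU (RS z) y hy.2
    have hyCn2 : ⟪RS z - PU (RS z), y - CS z⟫ = 0 := by
      have hrw : y - CS z = (y - PU (RS z)) - (CS z - PU (RS z)) := by abel
      have hflip : ⟪RS z - PU (RS z), CS z - PU (RS z)⟫ = 0 := by
        rw [real_inner_comm]; exact hCmn2
      rw [hrw, inner_sub_right, hymn2, hflip]
      ring
    have hn1yC : ⟪z - PS z, y - CS z⟫ = ⟪z - PS z, y - PS z⟫ := by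
      have hrw : y - CS z = (y - PS z) - ((CS z - z) + (z - PS z)) := by abel
      have hflip2 : ⟪z - PS z, CS z - z⟫ = -‖z - PS z‖ ^ 2 := by
        have h' : CS z - z = -(z - CS z) := by abel
        rw [h', inner_neg_right, real_inner_comm, h1]
      rw [hrw, inner_sub_right, inner_add_right, hflip2, real_inner_self_eq_norm_sq]
      ring
    have hmain : ⟪z - CS z, y - CS z⟫ = (2 * (s + t)) * ⟪z - PS z, y - PS z⟫ := by
      have hflipn2 : ⟪RS z - PU (RS z), y - CS z⟫ = 0 := hyCn2
      rw [hdec, inner_add_left, real_inner_smul_left, real_inner_smul_left, hflipn2, hn1yC]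
      ring
    -- f2 and f3
    have f3 : (2 * (s + t)) * ‖z - PS z‖ ^ 2
        + (2 * t) * ⟪RS z - PU (RS z), z - PS z⟫ = ‖z - PS z‖ ^ 2 := by
      have h1' := h1
      rw [hdec, inner_add_left, real_inner_smul_left, real_inner_smul_left,
        real_inner_self_eq_norm_sq] at h1'
      linarith
    have f2 : (2 * (s + t)) * ⟪z - PS z, RS z - PU (RS z)⟫
        + (2 * t) * ‖RS z - PU (RS z)‖ ^ 2 = 0 := by
      have h0 : ⟪z - CS z, RS z - PU (RS z)⟫ = 0 := by
        have h' : z - CS z = -(CS z - z) := by abel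
        rw [h', inner_neg_left, hCzn2]
        ring
      rw [hdec, inner_add_left, real_inner_smul_left, real_inner_smul_left,
        real_inner_self_eq_norm_sq] at h0
      linarith
    have hfinal : ⟪z - CS z, y - CS z⟫ ≤ 0 := by
      rcases eq_or_ne (z - PS z) 0 with hn1 | hn1
      · rw [hmain, hn1, inner_zero_left, mul_zero]
      · have hApos : 0 ≤ 2 * (s + t) := by
          rcases eq_or_ne (RS z - PU (RS z)) 0 with hn2 | hn2
          · rw [hn2, inner_zero_left, mul_zero, add_zero] at f3
            have hp : 0 < ‖z - PS z‖ ^ 2 := pow_pos (norm_pos_iff.mpr hn1) 2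
            nlinarith
          · have hq : 0 < ‖RS z - PU (RS z)‖ ^ 2 := pow_pos (norm_pos_iff.mpr hn2) 2
            have hp : 0 < ‖z - PS z‖ ^ 2 := pow_pos (norm_pos_iff.mpr hn1) 2
            have hcs : ⟪z - PS z, RS z - PU (RS z)⟫ ^ 2
                ≤ ‖z - PS z‖ ^ 2 * ‖RS z - PU (RS z)‖ ^ 2 := by
              have habs := abs_real_inner_le_norm (z - PS z) (RS z - PU (RS z))
              nlinarith [abs_nonneg ⟪z - PS z, RS z - PU (RS z)⟫,
                sq_abs ⟪z - PS z, RS z - PU (RS z)⟫, norm_nonneg (z - PS z),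
                norm_nonneg (RS z - PU (RS z))]
            have hflip3 : ⟪RS z - PU (RS z), z - PS z⟫ = ⟪z - PS z, RS z - PU (RS z)⟫ :=
              real_inner_comm _ _
            rw [hflip3] at f3
            have hAD : (2 * (s + t)) * (‖z - PS z‖ ^ 2 * ‖RS z - PU (RS z)‖ ^ 2
                - ⟪z - PS z, RS z - PU (RS z)⟫ ^ 2)
                = ‖z - PS z‖ ^ 2 * ‖RS z - PU (RS z)‖ ^ 2 := by
              linear_combination ‖RS z - PU (RS z)‖ ^ 2 * f3
                - ⟪z - PS z, RS z - PU (RS z)⟫ * f2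
            nlinarith [mul_pos hp hq]
        rw [hmain]
        exact mul_nonpos_of_nonneg_of_nonpos hApos hobt
    have hexp : ‖z - y‖ ^ 2 = ‖z - CS z‖ ^ 2 - 2 * ⟪z - CS z, y - CS z⟫ + ‖y - CS z‖ ^ 2 := by
      have hrw : z - y = (z - CS z) - (y - CS z) := by abel
      rw [hrw, norm_sub_sq_real]
    rw [norm_sub_rev (CS z) y, norm_sub_rev (CS z) z]
    linarith
  · -- infDist bound
    have hle : Metric.infDist z (S z) ≤ ‖z - PS z‖ := by
      have := Metric.infDist_le_dist_of_mem (x := z) (hPS z).1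
      rwa [dist_eq_norm] at this
    refine le_trans hle ?_
    rcases eq_or_ne (z - PS z) 0 with h0 | h0
    · rw [h0, norm_zero]
      exact norm_nonneg _
    · have hin := real_inner_le_norm (z - CS z) (z - PS z)
      rw [h1] at hin
      have hpos : 0 < ‖z - PS z‖ := norm_pos_iff.mpr h0
      rw [norm_sub_rev (CS z) z]
      nlinarith

set_option maxHeartbeats 1000000 in
theorem stmt_10 {n : ℕ} (K U : Set (EuclideanSpace ℝ (Fin n)))
    (hKcl : IsClosed K) (hKcv : Convex ℝ K)
    (hU : ∃ (Q : EuclideanSpace ℝ (Fin n) →ₗ[ℝ] EuclideanSpace ℝ (Fin n))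
      (b : EuclideanSpace ℝ (Fin n)), U = {x | Q x = b})
    (hKU : (K ∩ U).Nonempty)
    (S : EuclideanSpace ℝ (Fin n) → Set (EuclideanSpace ℝ (Fin n)))
    (hA1 : ∀ x, IsClosed (S x) ∧ Convex ℝ (S x))
    (hA2 : ∀ x, K ⊆ S x)
    (hA3 : ∀ (z : ℕ → EuclideanSpace ℝ (Fin n)) (zstar : EuclideanSpace ℝ (Fin n)),
      Tendsto z atTop (𝓝 zstar) →
      Tendsto (fun k => Metric.infDist (z k) (S (z k))) atTop (𝓝 0) → zstar ∈ K)
    (PS PU : EuclideanSpace ℝ (Fin n) → EuclideanSpace ℝ (Fin n))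
    (hPS : ∀ y, PS y ∈ S y ∧ ∀ w ∈ S y, dist y (PS y) ≤ dist y w)
    (hPU : ∀ y, PU y ∈ U ∧ ∀ w ∈ U, dist y (PU y) ≤ dist y w)
    (RS RU : EuclideanSpace ℝ (Fin n) → EuclideanSpace ℝ (Fin n))
    (hRS : ∀ y, RS y = (2 : ℝ) • PS y - y)
    (hRU : ∀ y, RU y = (2 : ℝ) • PU y - y)
    (CS : EuclideanSpace ℝ (Fin n) → EuclideanSpace ℝ (Fin n))
    (hCS : ∀ x ∈ U,
      CS x ∈ affineSpan ℝ ({x, RS x, RU (RS x)} : Set (EuclideanSpace ℝ (Fin n))) ∧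
      dist (CS x) x = dist (CS x) (RS x) ∧ dist (CS x) x = dist (CS x) (RU (RS x)))
    (x : ℕ → EuclideanSpace ℝ (Fin n))
    (hx0 : x 0 ∈ U)
    (hxk : ∀ k, x (k + 1) = CS (x k)) :
    (∀ k, x k ∈ U) ∧
    (∀ k, ∀ y ∈ K ∩ U, dist (x (k + 1)) y ≤ dist (x k) y) ∧
    (∃ xstar ∈ K ∩ U, Tendsto x atTop (𝓝 xstar)) := by
  obtain ⟨Q, b, hUQ⟩ := hU
  have step := fun (z : EuclideanSpace ℝ (Fin n)) (hz : z ∈ U) =>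
    carm_step K U Q b hUQ S hA1 hA2 PS PU hPS hPU RS RU hRS hRU CS hCS z hz
  have hxU : ∀ k, x k ∈ U := by
    intro k
    induction k with
    | zero => exact hx0
    | succ k ih => rw [hxk k]; exact (step (x k) ih).1
  have hfej : ∀ k, ∀ y ∈ K ∩ U,
      ‖x (k + 1) - y‖ ^ 2 + ‖x (k + 1) - x k‖ ^ 2 ≤ ‖x k - y‖ ^ 2 := by
    intro k y hy
    rw [hxk k]
    exact (step (x k) (hxU k)).2.1 y hy
  have hinf : ∀ k, Metric.infDist (x k) (S (x k)) ≤ ‖x (k + 1) - x k‖ := by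
    intro k
    rw [hxk k]
    exact (step (x k) (hxU k)).2.2
  have hfejd : ∀ k, ∀ y ∈ K ∩ U, dist (x (k + 1)) y ≤ dist (x k) y := by
    intro k y hy
    have h := hfej k y hy
    rw [dist_eq_norm, dist_eq_norm]
    nlinarith [norm_nonneg (x (k + 1) - y), norm_nonneg (x k - y),
      sq_nonneg ‖x (k + 1) - x k‖]
  refine ⟨hxU, hfejd, ?_⟩
  obtain ⟨y₀, hy₀⟩ := hKU
  have hdm : ∀ k, ‖x (k + 1) - y₀‖ ≤ ‖x k - y₀‖ := by
    intro k
    have := hfejd k y₀ hy₀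
    rwa [dist_eq_norm, dist_eq_norm] at this
  have hdanti : Antitone fun k => ‖x k - y₀‖ := antitone_nat_of_succ_le hdm
  have hd2anti : Antitone fun k => ‖x k - y₀‖ ^ 2 :=
    fun i j hij => pow_le_pow_left₀ (norm_nonneg _) (hdanti hij) 2
  have hbdd : BddBelow (Set.range fun k => ‖x k - y₀‖ ^ 2) := by
    refine ⟨0, ?_⟩
    rintro r ⟨k, rfl⟩
    positivity
  have hL := tendsto_atTop_ciInf hd2anti hbdd
  have hLs : Tendsto (fun k => ‖x (k + 1) - y₀‖ ^ 2) atTop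
      (𝓝 (⨅ i, ‖x i - y₀‖ ^ 2)) := (tendsto_add_atTop_iff_nat 1).mpr hL
  have hdiff : Tendsto (fun k => ‖x k - y₀‖ ^ 2 - ‖x (k + 1) - y₀‖ ^ 2) atTop (𝓝 0) := by
    have := hL.sub hLs
    simpa using this
  have hDel2 : Tendsto (fun k => ‖x (k + 1) - x k‖ ^ 2) atTop (𝓝 0) := by
    refine squeeze_zero (fun k => sq_nonneg _) (fun k => ?_) hdiff
    have := hfej k y₀ hy₀
    linarith
  have hDel : Tendsto (fun k => ‖x (k + 1) - x k‖) atTop (𝓝 0) := by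
    have h' := hDel2.sqrt
    have heq : (fun k => Real.sqrt (‖x (k + 1) - x k‖ ^ 2))
        = fun k => ‖x (k + 1) - x k‖ := funext fun k => Real.sqrt_sq (norm_nonneg _)
    rwa [heq, Real.sqrt_zero] at h'
  have hball : ∀ k, x k ∈ Metric.closedBall y₀ ‖x 0 - y₀‖ := by
    intro k
    rw [Metric.mem_closedBall, dist_eq_norm]
    exact hdanti (Nat.zero_le k)
  obtain ⟨a, -, φ, hφ, hφt⟩ := tendsto_subseq_of_bounded Metric.isBounded_closedBall hball
  have hUcl : IsClosed U := by
    rw [hUQ]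
    exact isClosed_eq Q.continuous_of_finiteDimensional continuous_const
  have haU : a ∈ U := hUcl.mem_of_tendsto hφt (Filter.Eventually.of_forall fun j => hxU (φ j))
  have haK : a ∈ K := by
    refine hA3 (x ∘ φ) a hφt ?_
    refine squeeze_zero (fun j => Metric.infDist_nonneg) (fun j => hinf (φ j)) ?_
    exact hDel.comp hφ.tendsto_atTop
  have hea : ∀ k, ‖x (k + 1) - a‖ ≤ ‖x k - a‖ := by
    intro k
    have := hfejd k a ⟨haK, haU⟩
    rwa [dist_eq_norm, dist_eq_norm] at this
  have heanti : Antitone fun k => ‖x k - a‖ := antitone_nat_of_succ_le hea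
  have hebdd : BddBelow (Set.range fun k => ‖x k - a‖) := by
    refine ⟨0, ?_⟩
    rintro r ⟨k, rfl⟩
    exact norm_nonneg _
  have heL := tendsto_atTop_ciInf heanti hebdd
  have hsub0 : Tendsto (fun j => ‖x (φ j) - a‖) atTop (𝓝 0) := by
    have := tendsto_iff_dist_tendsto_zero.mp hφt
    simpa [Function.comp, dist_eq_norm] using this
  have hsubL : Tendsto (fun j => ‖x (φ j) - a‖) atTop (𝓝 (⨅ i, ‖x i - a‖)) :=
    heL.comp hφ.tendsto_atTop
  have hinf0 : (⨅ i, ‖x i - a‖) = 0 := tendsto_nhds_unique hsubL hsub0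
  have hxa : Tendsto x atTop (𝓝 a) := by
    rw [tendsto_iff_dist_tendsto_zero]
    rw [hinf0] at heL
    simpa [dist_eq_norm] using heL
  exact ⟨a, ⟨haK, haU⟩, hxa⟩
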